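/- Let G be the complement of the cycle C7 on seven vertices. Then G admits an STC-labeling with at least 7 strong edges, but every cluster subgraph of G (spanning subgraph of G that is a disjoint union of cliques) has at most 6 edges. In particular, no optimal STC-labeling of G is a cluster labeling. -/

import Mathlib

/-- An STC-labeling of a simple graph `G`, given by its set `S` of strong edges
(the weak edges are `G.edgeSet \ S`). -/
def IsSTCLabeling {V : Type*} (G : SimpleGraph V) (S : Set (Sym2 V)) : Prop :=
  S ⊆ G.edgeSet ∧ ∀ u v w : V, s(u, v) ∈ S → s(v, w) ∈ S → u ≠ w → G.Adj u w

/-- The cycle `C₇` on the vertices `ZMod 7`: `i` and `j` are adjacent iff they are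
consecutive. -/
def cycleSeven : SimpleGraph (ZMod 7) :=
  SimpleGraph.fromRel (fun i j => j - i = 1)

/-- The complement of `C₇`. -/
def complC7 : SimpleGraph (ZMod 7) := cycleSevenᶜ

instance : DecidableRel complC7.Adj := fun u v => by
  unfold complC7 cycleSeven
  rw [SimpleGraph.compl_adj, SimpleGraph.fromRel_adj]
  infer_instance

lemma noK4 : ∀ a b c d : ZMod 7, complC7.Adj a b → complC7.Adj a c → complC7.Adj a d →
    complC7.Adj b c → complC7.Adj b d → complC7.Adj c d → False := by decide

lemma cluster_le_six (S : Set (Sym2 (ZMod 7))) (hS : S ⊆ complC7.edgeSet)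
    (hc : ∀ u v w : ZMod 7, s(u, v) ∈ S → s(v, w) ∈ S → u ≠ w → s(u, w) ∈ S) :
    S.ncard ≤ 6 := by
  classical
  set H : SimpleGraph (ZMod 7) :=
    { Adj := fun u v => s(u, v) ∈ S
      symm := ⟨by intro u v h; rwa [Sym2.eq_swap]⟩
      loopless := ⟨fun v h => complC7.loopless.irrefl v ((complC7.mem_edgeSet).mp (hS h))⟩ } with hH
  have hadj : ∀ u v, H.Adj u v ↔ s(u, v) ∈ S := fun _ _ => Iff.rfl
  have hSH : S = ↑H.edgeFinset := by
    ext e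
    induction e using Sym2.ind with
    | _ u v =>
      rw [Finset.mem_coe, SimpleGraph.mem_edgeFinset, SimpleGraph.mem_edgeSet, hadj]
  -- adjacency in H gives adjacency in complC7
  have hHC : ∀ u v, H.Adj u v → complC7.Adj u v := fun u v h =>
    (complC7.mem_edgeSet).mp (hS h)
  -- degrees at most 2
  have hdeg : ∀ v, H.degree v ≤ 2 := by
    intro v
    by_contra h
    push_neg at h
    obtain ⟨t, hts, ht3⟩ := Finset.exists_subset_card_eq h
    obtain ⟨a, b, c, hab, hac, hbc, rfl⟩ := Finset.card_eq_three.mp ht3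
    have ha : H.Adj v a := (SimpleGraph.mem_neighborFinset _ _ _).mp (hts (by simp))
    have hb : H.Adj v b := (SimpleGraph.mem_neighborFinset _ _ _).mp (hts (by simp))
    have hcc : H.Adj v c := (SimpleGraph.mem_neighborFinset _ _ _).mp (hts (by simp))
    have Hab : H.Adj a b := by
      rw [hadj]; exact hc a v b (by rw [Sym2.eq_swap]; exact ha) hb hab
    have Hac : H.Adj a c := by
      rw [hadj]; exact hc a v c (by rw [Sym2.eq_swap]; exact ha) hcc hac
    have Hbc : H.Adj b c := by
      rw [hadj]; exact hc b v c (by rw [Sym2.eq_swap]; exact hb) hcc hbc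
    exact noK4 v a b c (hHC _ _ ha) (hHC _ _ hb) (hHC _ _ hcc)
      (hHC _ _ Hab) (hHC _ _ Hac) (hHC _ _ Hbc)
  -- handshake
  have hsum := H.sum_degrees_eq_twice_card_edges
  have huniv : (Finset.univ : Finset (ZMod 7)).card = 7 := by
    rw [Finset.card_univ, ZMod.card]
  have hcard7 : H.edgeFinset.card ≤ 7 := by
    have h2 : ∑ v, H.degree v ≤ ∑ _v : ZMod 7, 2 :=
      Finset.sum_le_sum (fun v _ => hdeg v)
    rw [hsum, Finset.sum_const, huniv, smul_eq_mul] at h2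
    omega
  rw [hSH, Set.ncard_coe_finset]
  by_contra h6
  push_neg at h6
  have h7 : H.edgeFinset.card = 7 := by omega
  have hdeg2 : ∀ v, H.degree v = 2 := by
    by_contra hh
    push_neg at hh
    obtain ⟨v, hv⟩ := hh
    have hlt : H.degree v < 2 := lt_of_le_of_ne (hdeg v) hv
    have : ∑ u, H.degree u < ∑ _u : ZMod 7, 2 :=
      Finset.sum_lt_sum (fun u _ => hdeg u) ⟨v, Finset.mem_univ v, hlt⟩
    rw [hsum, h7, Finset.sum_const, huniv, smul_eq_mul] at this
    omega
  -- classes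
  set cls : ZMod 7 → Finset (ZMod 7) := fun v => insert v (H.neighborFinset v) with hcls
  have hnbcard : ∀ v, (H.neighborFinset v).card = 2 := fun v => hdeg2 v
  have hclscard : ∀ v, (cls v).card = 3 := by
    intro v
    rw [hcls]
    rw [Finset.card_insert_of_notMem
      (fun h => H.loopless.irrefl v ((SimpleGraph.mem_neighborFinset _ _ _).mp h)), hnbcard]
  have key : ∀ v x y : ZMod 7, H.neighborFinset v = {x, y} → cls x = cls v := by
    intro v x y hv
    have hvx : H.Adj v x := by
      rw [← SimpleGraph.mem_neighborFinset, hv]; simp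
    have hvy : H.Adj v y := by
      rw [← SimpleGraph.mem_neighborFinset, hv]; simp
    have hxy : x ≠ y := by
      intro h
      subst h
      have := hnbcard v
      rw [hv] at this
      simp at this
    have Hxy : H.Adj x y := by
      rw [hadj]; exact hc x v y (by rw [Sym2.eq_swap]; exact hvx) hvy hxy
    have hsubst : ({v, y} : Finset (ZMod 7)) ⊆ H.neighborFinset x := by
      intro z hz
      rw [SimpleGraph.mem_neighborFinset]
      rcases Finset.mem_insert.mp hz with rfl | hz
      · exact hvx.symm
      · rw [Finset.mem_singleton] at hz; subst hz; exact Hxy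
    have hvy' : v ≠ y := H.ne_of_adj hvy
    have hnx : H.neighborFinset x = {v, y} := by
      refine (Finset.eq_of_subset_of_card_le hsubst ?_).symm
      rw [hnbcard, Finset.card_insert_of_notMem (by simp [hvy']), Finset.card_singleton]
    show insert x (H.neighborFinset x) = insert v (H.neighborFinset v)
    rw [hnx, hv]
    exact Finset.insert_comm x v {y}
  have hmem : ∀ v x : ZMod 7, x ∈ cls v → cls x = cls v := by
    intro v x hx
    rcases Finset.mem_insert.mp hx with rfl | hx
    · rfl
    · obtain ⟨a, b, hab, hv⟩ := Finset.card_eq_two.mp (hnbcard v)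
      rw [hv] at hx
      rcases Finset.mem_insert.mp hx with rfl | hx
      · exact key v x b hv
      · rw [Finset.mem_singleton] at hx
        subst hx
        exact key v x a (by rw [hv, Finset.pair_comm])
  -- partition count
  set P : Finset (Finset (ZMod 7)) := Finset.univ.image cls with hP
  have hdisj : ∀ s ∈ P, ∀ t ∈ P, s ≠ t → Disjoint s t := by
    intro s hs t ht hst
    obtain ⟨u, -, rfl⟩ := Finset.mem_image.mp hs
    obtain ⟨v, -, rfl⟩ := Finset.mem_image.mp ht
    rw [Finset.disjoint_left]
    intro x hxu hxv
    exact hst ((hmem u x hxu).symm.trans (hmem v x hxv))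
  have hbu : (P.biUnion (fun x => x)).card = 3 * P.card := by
    rw [Finset.card_biUnion hdisj]
    have : ∀ t ∈ P, t.card = 3 := by
      intro t ht
      obtain ⟨u, -, rfl⟩ := Finset.mem_image.mp ht
      exact hclscard u
    rw [Finset.sum_congr rfl this, Finset.sum_const, smul_eq_mul, mul_comm]
  have hcov : (Finset.univ : Finset (ZMod 7)) ⊆ P.biUnion (fun x => x) := by
    intro v _
    rw [Finset.mem_biUnion]
    exact ⟨cls v, Finset.mem_image_of_mem cls (Finset.mem_univ v), Finset.mem_insert_self v _⟩
  have h1 : (Finset.univ : Finset (ZMod 7)).card ≤ (P.biUnion (fun x => x)).card :=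
    Finset.card_le_card hcov
  have h2 : (P.biUnion (fun x => x)).card ≤ (Finset.univ : Finset (ZMod 7)).card :=
    Finset.card_le_card (Finset.subset_univ _)
  rw [huniv] at h1 h2
  omega


def T7 : Finset (Sym2 (ZMod 7)) := Finset.univ.image (fun i : ZMod 7 => s(i, i+2))

lemma T7card : 7 ≤ T7.card := by decide
lemma T7stc : ∀ u v w : ZMod 7, s(u, v) ∈ T7 → s(v, w) ∈ T7 → u ≠ w → complC7.Adj u w := by
  decide
lemma T7sub : ∀ e ∈ T7, e ∈ complC7.edgeFinset := by decide

lemma part1 : ∃ S : Set (Sym2 (ZMod 7)), IsSTCLabeling complC7 S ∧ 7 ≤ S.ncard := by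
  refine ⟨↑T7, ⟨?_, ?_⟩, ?_⟩
  · intro e he
    rw [Finset.mem_coe] at he
    exact SimpleGraph.mem_edgeFinset.mp (T7sub e he)
  · intro u v w h1 h2 hne
    exact T7stc u v w (Finset.mem_coe.mp h1) (Finset.mem_coe.mp h2) hne
  · rw [Set.ncard_coe_finset]
    exact T7card


/-- The complement of `C₇` has an STC-labeling with at least `7` strong edges, but
every cluster subgraph of it has at most `6` edges; in particular no optimal
STC-labeling of it is a cluster labeling. -/
theorem complC7_stc_beats_cluster_deletion :
    (∃ S : Set (Sym2 (ZMod 7)), IsSTCLabeling complC7 S ∧ 7 ≤ S.ncard) ∧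
    (∀ S : Set (Sym2 (ZMod 7)), S ⊆ complC7.edgeSet →
      (∀ u v w : ZMod 7, s(u, v) ∈ S → s(v, w) ∈ S → u ≠ w → s(u, w) ∈ S) →
      S.ncard ≤ 6) ∧
    (∀ S : Set (Sym2 (ZMod 7)), IsSTCLabeling complC7 S →
      (∀ S' : Set (Sym2 (ZMod 7)), IsSTCLabeling complC7 S' → S'.ncard ≤ S.ncard) →
      ¬ (∀ u v w : ZMod 7, s(u, v) ∈ S → s(v, w) ∈ S → u ≠ w → s(u, w) ∈ S)) := by
  refine ⟨part1, cluster_le_six, ?_⟩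
  intro S hS hopt hclosed
  obtain ⟨S', hS', h7⟩ := part1
  have hle : S'.ncard ≤ S.ncard := hopt S' hS'
  have h6 : S.ncard ≤ 6 := cluster_le_six S (And.left hS) hclosed
  omega
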